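/- arXiv:1902.08639 — 3 statements merged into one kernel-verified Lean document; each statement's English description precedes it below -/
import Mathlib

section
/- Fix η > 0 and vectors v_i, v_j ∈ ℝ^B with v_i ≠ v_j and η ≤ ‖v_i − v_j‖₂/2. Then the unique minimizer (μ_i, μ_j) of P(μ_i, μ_j) = η‖μ_i − μ_j‖₂ + (1/2)‖v_i − μ_i‖₂² + (1/2)‖v_j − μ_j‖₂² over ℝ^B × ℝ^B is given by μ_i = (1−α)v_i + α v_j and μ_j = α v_i + (1−α)v_j with α = η/‖v_i − v_j‖₂. -/
set_option maxHeartbeats 1000000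


/-- Proximal objective P(μ_i, μ_j) = η‖μ_i − μ_j‖₂ + ½‖v_i − μ_i‖₂² + ½‖v_j − μ_j‖₂². -/
noncomputable def proxObj {B : ℕ} (η : ℝ) (vi vj mi mj : EuclideanSpace ℝ (Fin B)) : ℝ :=
  η * ‖mi - mj‖ + (1 / 2) * ‖vi - mi‖ ^ 2 + (1 / 2) * ‖vj - mj‖ ^ 2

lemma prox_lower_bound {B : ℕ} (η : ℝ) (hη : 0 < η)
    (vi vj ni nj : EuclideanSpace ℝ (Fin B)) :
    η * ‖vi - vj‖ - η ^ 2 ≤ proxObj η vi vj ni nj := by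
  have h1 : ‖vi - vj‖ ≤ ‖vi - ni‖ + ‖ni - nj‖ + ‖vj - nj‖ := by
    have h0 : vi - vj = (vi - ni) + (ni - nj) + -(vj - nj) := by abel
    calc ‖vi - vj‖ = ‖(vi - ni) + (ni - nj) + -(vj - nj)‖ := by rw [← h0]
      _ ≤ ‖vi - ni‖ + ‖ni - nj‖ + ‖-(vj - nj)‖ := norm_add₃_le
      _ = ‖vi - ni‖ + ‖ni - nj‖ + ‖vj - nj‖ := by rw [norm_neg]
  have h2 := mul_le_mul_of_nonneg_left h1 hη.le
  unfold proxObj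
  nlinarith [sq_nonneg (‖vi - ni‖ - η), sq_nonneg (‖vj - nj‖ - η)]

lemma midpoint_sq {B : ℕ} (v a b : EuclideanSpace ℝ (Fin B)) :
    ‖v - (2⁻¹:ℝ) • (a + b)‖ ^ 2
      = 2⁻¹ * ‖v - a‖ ^ 2 + 2⁻¹ * ‖v - b‖ ^ 2 - 4⁻¹ * ‖a - b‖ ^ 2 := by
  have h1 : v - (2⁻¹:ℝ) • (a + b) = (2⁻¹:ℝ) • ((v - a) + (v - b)) := by module
  have h2 : a - b = (v - b) - (v - a) := by abel
  rw [h1, h2, norm_smul, norm_sub_rev (v - b) (v - a)]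
  have hp := parallelogram_law_with_norm ℝ (v - a) (v - b)
  have hn : ‖(2⁻¹:ℝ)‖ = 2⁻¹ := by
    rw [Real.norm_eq_abs]; norm_num
  rw [hn]
  nlinarith [hp]

/-- for 0 < η ≤ ‖v_i − v_j‖/2 and v_i ≠ v_j, the unique minimizer is
μ_i = (1−α)v_i + αv_j, μ_j = αv_i + (1−α)v_j with α = η/‖v_i − v_j‖. -/
theorem prox_unique_minimizer_noncollapse {B : ℕ} (η : ℝ) (hη : 0 < η)
    (vi vj : EuclideanSpace ℝ (Fin B)) (hne : vi ≠ vj)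
    (hsmall : η ≤ ‖vi - vj‖ / 2) :
    let α : ℝ := η / ‖vi - vj‖
    let mi := (1 - α) • vi + α • vj
    let mj := α • vi + (1 - α) • vj
    ∀ ni nj : EuclideanSpace ℝ (Fin B), (ni, nj) ≠ (mi, mj) →
      proxObj η vi vj mi mj < proxObj η vi vj ni nj := by
  intro α mi mj
  have hr : (0:ℝ) < ‖vi - vj‖ := norm_pos_iff.mpr (sub_ne_zero.mpr hne)
  have hα : α = η / ‖vi - vj‖ := rfl
  have hαr : α * ‖vi - vj‖ = η := by rw [hα]; field_simp
  have hα0 : 0 ≤ α := by rw [hα]; positivity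
  have hαhalf : α ≤ 1 / 2 := by
    rw [hα, div_le_div_iff₀ hr two_pos]; linarith
  have hmi : vi - mi = α • (vi - vj) := by
    show vi - ((1 - α) • vi + α • vj) = α • (vi - vj); module
  have hmj : vj - mj = (-α) • (vi - vj) := by
    show vj - (α • vi + (1 - α) • vj) = (-α) • (vi - vj); module
  have hmm : mi - mj = (1 - 2 * α) • (vi - vj) := by
    show ((1 - α) • vi + α • vj) - (α • vi + (1 - α) • vj) = (1 - 2 * α) • (vi - vj); module
  have hnmi : ‖vi - mi‖ = η := by
    rw [hmi, norm_smul, Real.norm_eq_abs, abs_of_nonneg hα0, hαr]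
  have hnmj : ‖vj - mj‖ = η := by
    rw [hmj, norm_smul, Real.norm_eq_abs, abs_neg, abs_of_nonneg hα0, hαr]
  have hnmm : ‖mi - mj‖ = (1 - 2 * α) * ‖vi - vj‖ := by
    rw [hmm, norm_smul, Real.norm_eq_abs, abs_of_nonneg (by linarith)]
  have hPm : proxObj η vi vj mi mj = η * ‖vi - vj‖ - η ^ 2 := by
    unfold proxObj
    rw [hnmm, hnmi, hnmj]
    linear_combination (-2 * η) * hαr
  intro ni nj hne2
  by_contra hcon
  push_neg at hcon
  have hlb := prox_lower_bound η hη vi vj ni nj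
  have heq : proxObj η vi vj ni nj = η * ‖vi - vj‖ - η ^ 2 := by
    rw [hPm] at hcon; linarith
  -- midpoint
  set qi : EuclideanSpace ℝ (Fin B) := (2⁻¹:ℝ) • (ni + mi) with hqi
  set qj : EuclideanSpace ℝ (Fin B) := (2⁻¹:ℝ) • (nj + mj) with hqj
  have hqq : qi - qj = (2⁻¹:ℝ) • ((ni - nj) + (mi - mj)) := by
    rw [hqi, hqj]; module
  have hQ : ‖qi - qj‖ ≤ 2⁻¹ * ‖ni - nj‖ + 2⁻¹ * ‖mi - mj‖ := by
    rw [hqq, norm_smul, Real.norm_eq_abs]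
    have := norm_add_le (ni - nj) (mi - mj)
    rw [abs_of_nonneg (by norm_num : (0:ℝ) ≤ 2⁻¹)]
    nlinarith
  have hqi2 := midpoint_sq vi ni mi
  have hqj2 := midpoint_sq vj nj mj
  have hlbq := prox_lower_bound η hη vi vj qi qj
  have hηQ := mul_le_mul_of_nonneg_left hQ hη.le
  have hPn := heq
  unfold proxObj at hlbq hPn hPm
  rw [← hqi] at hqi2
  rw [← hqj] at hqj2
  have hzero : ‖ni - mi‖ ^ 2 + ‖nj - mj‖ ^ 2 ≤ 0 := by
    linarith [hlbq, hPn, hPm, hqi2, hqj2, hηQ]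
  have h1 : ‖ni - mi‖ ^ 2 = 0 := le_antisymm (by nlinarith [sq_nonneg ‖nj - mj‖]) (sq_nonneg _)
  have h2 : ‖nj - mj‖ ^ 2 = 0 := le_antisymm (by nlinarith [sq_nonneg ‖ni - mi‖]) (sq_nonneg _)
  have hni : ni = mi := sub_eq_zero.mp (norm_eq_zero.mp (pow_eq_zero_iff two_ne_zero |>.mp h1))
  have hnj : nj = mj := sub_eq_zero.mp (norm_eq_zero.mp (pow_eq_zero_iff two_ne_zero |>.mp h2))
  exact hne2 (by rw [hni, hnj])
end

section
/- Fix η > 0 and vectors v_i, v_j ∈ ℝ^B with η > ‖v_i − v_j‖₂/2. Then the unique minimizer (μ_i, μ_j) of P(μ_i, μ_j) = η‖μ_i − μ_j‖₂ + (1/2)‖v_i − μ_i‖₂² + (1/2)‖v_j − μ_j‖₂² over ℝ^B × ℝ^B satisfies μ_i = μ_j = (v_i + v_j)/2. -/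
lemma prox_key1 (η D S T E : ℝ) (hη : 0 < η) (hD : D < 2*η) (hDn : 0 ≤ D) (hSn : 0 ≤ S)
    (hTn : 0 ≤ T) (hE : 0 < E) (hns : D - S ≤ E) :
    (1/4) * D^2 < η * E + (1/4) * S^2 + (1/4) * T^2 := by
  rcases le_or_gt D S with hc | hc
  · nlinarith [mul_pos hη hE, mul_le_mul hc hc hDn hSn, sq_nonneg T]
  · nlinarith [mul_le_mul_of_nonneg_left hns hη.le, sq_nonneg T,
      mul_pos hη hE, mul_nonneg hSn (sub_nonneg.mpr hc.le)]

lemma prox_key2 (η D S T E : ℝ) (hη : 0 < η) (hD : D < 2*η) (hDn : 0 ≤ D) (hSn : 0 ≤ S)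
    (hT : 0 < T) (hEn : 0 ≤ E) (hns : D - S ≤ E) :
    (1/4) * D^2 < η * E + (1/4) * S^2 + (1/4) * T^2 := by
  rcases le_or_gt D S with hc | hc
  · nlinarith [mul_nonneg hη.le hEn, mul_le_mul hc hc hDn hSn, mul_pos hT hT]
  · nlinarith [mul_le_mul_of_nonneg_left hns hη.le, mul_pos hT hT,
      mul_nonneg hη.le hEn, mul_nonneg hSn (sub_nonneg.mpr hc.le)]

/-- for η > ‖v_i − v_j‖/2, the unique minimizer collapses:
μ_i = μ_j = (v_i + v_j)/2. -/
theorem prox_unique_minimizer_collapse {B : ℕ} (η : ℝ) (hη : 0 < η)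
    (vi vj : EuclideanSpace ℝ (Fin B)) (hbig : ‖vi - vj‖ / 2 < η) :
    let m := (1 / 2 : ℝ) • (vi + vj)
    ∀ ni nj : EuclideanSpace ℝ (Fin B), (ni, nj) ≠ (m, m) →
      proxObj η vi vj m m < proxObj η vi vj ni nj := by
  intro m ni nj hne
  have hd2 : ‖vi - vj‖ < 2 * η := by linarith
  set d := vi - vj with hd
  set a := vi - ni with ha
  set b := vj - nj with hb
  have hnij : ni - nj = d - (a - b) := by
    rw [hd, ha, hb]; abel
  have hvim : vi - m = (1/2 : ℝ) • d := by
    show vi - (1/2 : ℝ) • (vi + vj) = (1/2 : ℝ) • (vi - vj)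
    module
  have hvjm : vj - m = (-(1/2) : ℝ) • d := by
    show vj - (1/2 : ℝ) • (vi + vj) = (-(1/2) : ℝ) • (vi - vj)
    module
  have hP1 : proxObj η vi vj m m = (1/4) * ‖d‖^2 := by
    simp only [proxObj, sub_self, norm_zero, mul_zero, hvim, hvjm, norm_smul]
    simp [abs_of_nonneg]
    ring
  have hpar : ‖a + b‖ * ‖a + b‖ + ‖a - b‖ * ‖a - b‖ = 2 * (‖a‖ * ‖a‖ + ‖b‖ * ‖b‖) :=
    by simpa only [sq] using parallelogram_law_with_norm ℝ a b
  have hP2 : proxObj η vi vj ni nj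
      = η * ‖d - (a - b)‖ + (1/4) * ‖a - b‖^2 + (1/4) * ‖a + b‖^2 := by
    simp only [proxObj, hnij]
    nlinarith [hpar]
  rw [hP1, hP2]
  have hkey : a - b ≠ d ∨ a + b ≠ 0 := by
    by_contra h
    push_neg at h
    obtain ⟨h1, h2⟩ := h
    apply hne
    have h3 : a + a = d := by
      calc a + a = (a - b) + (a + b) := by abel
        _ = d + 0 := by rw [h1, h2]
        _ = d := add_zero d
    have h4 : b + b = -d := by
      calc b + b = (a + b) - (a - b) := by abel
        _ = 0 - d := by rw [h1, h2]
        _ = -d := by abel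
    have hni : ni = m := by
      have e1 : ni = vi - a := by rw [ha]; abel
      rw [e1]
      have e2 : vi - a = vi - (1/2 : ℝ) • (a + a) := by module
      rw [e2, h3, hd]
      show vi - (1/2 : ℝ) • (vi - vj) = (1/2 : ℝ) • (vi + vj)
      module
    have hnj : nj = m := by
      have e1 : nj = vj - b := by rw [hb]; abel
      rw [e1]
      have e2 : vj - b = vj - (1/2 : ℝ) • (b + b) := by module
      rw [e2, h4, hd]
      show vj - (1/2 : ℝ) • (-(vi - vj)) = (1/2 : ℝ) • (vi + vj)
      module
    rw [hni, hnj]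
  have hns : ‖d‖ - ‖a - b‖ ≤ ‖d - (a - b)‖ := norm_sub_norm_le _ _
  rcases hkey with hsd | ht
  · have hpos : (0:ℝ) < ‖d - (a - b)‖ := by
      rw [norm_pos_iff, sub_ne_zero]
      exact fun h => hsd h.symm
    exact prox_key1 η ‖d‖ ‖a - b‖ ‖a + b‖ ‖d - (a - b)‖ hη hd2 (norm_nonneg _)
      (norm_nonneg _) (norm_nonneg _) hpos hns
  · have ht0 : (0:ℝ) < ‖a + b‖ := norm_pos_iff.mpr ht
    exact prox_key2 η ‖d‖ ‖a - b‖ ‖a + b‖ ‖d - (a - b)‖ hη hd2 (norm_nonneg _)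
      (norm_nonneg _) ht0 (norm_nonneg _) hns
end

section
/- Let w_1,…,w_M be elements of Hilbert spaces H_1,…,H_M (not all zero) and p > 1. The minimizer over θ ∈ ℝ^M with θ ⪰ 0 and ‖θ‖_p ≤ 1 of the function θ ↦ ∑_{m=1}^M ‖w_m‖²_{H_m}/θ_m (with the convention t/0 = +∞ for t > 0 and 0/0 = 0) is attained at θ_m = ‖w_m‖^{2/(p+1)} / (∑_{m'} ‖w_{m'}‖^{2p/(p+1)})^{1/p}. -/
open Real Classical ENNReal

/-- The MKL objective θ ↦ ∑_m ‖w_m‖²/θ_m, valued in ℝ≥0∞, with the conventions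
t/0 = +∞ for t > 0 and 0/0 = 0. -/
noncomputable def mklObj (M : ℕ) (a : Fin M → ℝ) (θ : Fin M → ℝ) : ℝ≥0∞ :=
  ∑ m : Fin M, if a m = 0 then 0
    else if θ m = 0 then ⊤ else ENNReal.ofReal ((a m) ^ 2 / θ m)

/-- the closed-form MKL weight update. For Hilbert space elements
w_1,…,w_M (not all zero) and p > 1, the minimizer over {θ ⪰ 0, ‖θ‖_p ≤ 1} of
∑_m ‖w_m‖²/θ_m is attained at θ_m = ‖w_m‖^{2/(p+1)} / (∑_{m'} ‖w_{m'}‖^{2p/(p+1)})^{1/p}. -/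
theorem mkl_weight_update (M : ℕ) (hM : 0 < M)
    (H : Fin M → Type*) [∀ m, NormedAddCommGroup (H m)] [∀ m, InnerProductSpace ℝ (H m)]
    [∀ m, CompleteSpace (H m)]
    (w : ∀ m, H m) (hw : ∃ m, w m ≠ 0) (p : ℝ) (hp : 1 < p) :
    let θstar : Fin M → ℝ := fun m =>
      ‖w m‖ ^ (2 / (p + 1)) / (∑ m' : Fin M, ‖w m'‖ ^ (2 * p / (p + 1))) ^ (1 / p)
    ((∀ m, 0 ≤ θstar m) ∧ (∑ m : Fin M, (θstar m) ^ p) ^ (1 / p) ≤ 1) ∧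
    ∀ θ : Fin M → ℝ, (∀ m, 0 ≤ θ m) → (∑ m : Fin M, (θ m) ^ p) ^ (1 / p) ≤ 1 →
      mklObj M (fun m => ‖w m‖) θstar ≤ mklObj M (fun m => ‖w m‖) θ := by
  intro θstar
  set a : Fin M → ℝ := fun m => ‖w m‖ with ha
  have ha0 : ∀ m, 0 ≤ a m := fun m => norm_nonneg _
  set S : ℝ := ∑ m' : Fin M, a m' ^ (2 * p / (p + 1)) with hSdef
  have hp0 : (0:ℝ) < p := lt_trans one_pos hp
  have hp1 : (0:ℝ) < p + 1 := by linarith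
  have hexp : (0:ℝ) < 2 * p / (p + 1) := by positivity
  -- S > 0
  obtain ⟨m₀, hm₀⟩ := hw
  have ham₀ : 0 < a m₀ := by simpa [ha] using norm_pos_iff.mpr hm₀
  have hS : 0 < S := by
    apply Finset.sum_pos' (fun m _ => Real.rpow_nonneg (ha0 m) _)
    exact ⟨m₀, Finset.mem_univ _, Real.rpow_pos_of_pos ham₀ _⟩
  have hS1p : 0 < S ^ (1/p) := Real.rpow_pos_of_pos hS _
  have hθstar : θstar = fun m => a m ^ (2 / (p + 1)) / S ^ (1/p) := rfl
  -- θstar nonneg, and positive exactly where a m ≠ 0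
  have hθstar_nonneg : ∀ m, 0 ≤ θstar m := fun m => by
    rw [hθstar]
    exact div_nonneg (Real.rpow_nonneg (ha0 m) _) hS1p.le
  have hθstar_pos : ∀ m, a m ≠ 0 → 0 < θstar m := fun m hm => by
    rw [hθstar]
    exact div_pos (Real.rpow_pos_of_pos (lt_of_le_of_ne (ha0 m) (Ne.symm hm)) _) hS1p
  -- sum of θstar^p equals 1
  have hsum_θstar : ∑ m : Fin M, (θstar m) ^ p = 1 := by
    have : ∀ m : Fin M, (θstar m) ^ p = a m ^ (2 * p / (p + 1)) / S := by
      intro m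
      rw [hθstar]
      rw [Real.div_rpow (Real.rpow_nonneg (ha0 m) _) hS1p.le,
        ← Real.rpow_mul (ha0 m), ← Real.rpow_mul hS.le,
        show 2/(p+1)*p = 2*p/(p+1) by ring,
        show 1/p*p = 1 by field_simp, Real.rpow_one]
    rw [Finset.sum_congr rfl (fun m _ => this m), ← Finset.sum_div, ← hSdef, div_self hS.ne']
  constructor
  · refine ⟨hθstar_nonneg, ?_⟩
    rw [hsum_θstar, Real.one_rpow]
  -- minimality
  intro θ hθ0 hθnorm
  -- sum θ^p ≤ 1
  have hθp1 : ∑ m : Fin M, (θ m) ^ p ≤ 1 := by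
    have hnn : 0 ≤ ∑ m : Fin M, (θ m) ^ p :=
      Finset.sum_nonneg fun m _ => Real.rpow_nonneg (hθ0 m) _
    have := Real.rpow_le_one (Real.rpow_nonneg hnn _) hθnorm hp0.le
    rwa [← Real.rpow_mul hnn, one_div, inv_mul_cancel₀ hp0.ne', Real.rpow_one] at this
  -- value at θstar
  have hval : mklObj M a θstar = ENNReal.ofReal (S ^ ((p+1)/p)) := by
    have hterm : ∀ m : Fin M,
        (if a m = 0 then (0:ℝ≥0∞) else if θstar m = 0 then ⊤
          else ENNReal.ofReal ((a m) ^ 2 / θstar m))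
        = ENNReal.ofReal (a m ^ (2 * p / (p + 1)) * S ^ (1/p)) := by
      intro m
      by_cases hm : a m = 0
      · simp [hm, Real.zero_rpow hexp.ne']
      · have hpos : 0 < a m := lt_of_le_of_ne (ha0 m) (Ne.symm hm)
        rw [if_neg hm, if_neg (hθstar_pos m hm).ne']
        congr 1
        show a m ^ 2 / (a m ^ (2 / (p + 1)) / S ^ (1/p)) = _
        rw [div_div_eq_mul_div, ← Real.rpow_natCast (a m) 2, mul_comm, mul_div_assoc,
          ← Real.rpow_sub hpos, mul_comm]
        congr 1
        push_cast
        field_simp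
        ring
    rw [mklObj, Finset.sum_congr rfl (fun m _ => hterm m),
      ← ENNReal.ofReal_sum_of_nonneg (fun m _ => by positivity), ← Finset.sum_mul, ← hSdef]
    congr 1
    rw [show (p+1)/p = 1 + 1/p by field_simp, Real.rpow_add hS, Real.rpow_one]
  rw [hval]
  -- case: some θ m = 0 with a m ≠ 0
  by_cases hz : ∃ m : Fin M, a m ≠ 0 ∧ θ m = 0
  · obtain ⟨m, hm, hθm⟩ := hz
    have : mklObj M a θ = ⊤ := by
      rw [mklObj, ENNReal.sum_eq_top]
      exact ⟨m, Finset.mem_univ m, by simp [hm, hθm]⟩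
    rw [this]; exact le_top
  · push_neg at hz
    -- θ m > 0 whenever a m ≠ 0
    have hθpos : ∀ m, a m ≠ 0 → 0 < θ m := fun m hm =>
      lt_of_le_of_ne (hθ0 m) (Ne.symm (hz m hm))
    set T : ℝ := ∑ m : Fin M, (if a m = 0 then 0 else (a m)^2 / θ m) with hT
    have hTnn : 0 ≤ T := Finset.sum_nonneg fun m _ => by
      by_cases hm : a m = 0
      · simp [hm]
      · simp only [hm, if_false]
        exact div_nonneg (by positivity) (hθ0 m)
    have hvalθ : mklObj M a θ = ENNReal.ofReal T := by
      rw [mklObj, hT, ENNReal.ofReal_sum_of_nonneg]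
      · apply Finset.sum_congr rfl
        intro m _
        by_cases hm : a m = 0
        · simp [hm]
        · rw [if_neg hm, if_neg hm, if_neg (hθpos m hm).ne']
      · intro m _
        by_cases hm : a m = 0
        · simp [hm]
        · simp only [hm, if_false]
          exact div_nonneg (by positivity) (hθ0 m)
    rw [hvalθ]
    apply ENNReal.ofReal_le_ofReal
    -- Hölder: S ≤ T^{p/(p+1)} * (∑ θ^p)^{1/(p+1)}
    have hconj : Real.HolderConjugate ((p+1)/p) (p+1) := by
      constructor
      · rw [inv_div, inv_one]
        field_simp
      · positivity
      · positivity
    set f : Fin M → ℝ := fun m => if a m = 0 then 0 else ((a m)^2 / θ m) ^ (p/(p+1)) with hf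
    set g : Fin M → ℝ := fun m => (θ m) ^ (p/(p+1)) with hg
    have hfnn : ∀ m : Fin M, 0 ≤ f m := fun m => by
      rw [hf]
      by_cases hm : a m = 0
      · simp [hm]
      · simp only [hm, if_false]
        exact Real.rpow_nonneg (div_nonneg (by positivity) (hθ0 m)) _
    have hgnn : ∀ m : Fin M, 0 ≤ g m := fun m => Real.rpow_nonneg (hθ0 m) _
    have holder := Real.inner_le_Lp_mul_Lq_of_nonneg Finset.univ hconj
      (fun m _ => hfnn m) (fun m _ => hgnn m)
    -- identify the three sums
    have hfg : ∑ m : Fin M, f m * g m = S := by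
      apply Finset.sum_congr rfl
      intro m _
      by_cases hm : a m = 0
      · simp [hf, hm, Real.zero_rpow hexp.ne']
      · have hθm := hθpos m hm
        have hpos : 0 < a m := lt_of_le_of_ne (ha0 m) (Ne.symm hm)
        rw [hf, hg]
        simp only [hm, if_false]
        rw [← Real.mul_rpow (div_nonneg (by positivity) (hθ0 m)) (hθ0 m),
          div_mul_cancel₀ _ hθm.ne', ← Real.rpow_natCast (a m) 2, ← Real.rpow_mul (ha0 m)]
        congr 1
        push_cast
        ring
    have hfr : ∑ m : Fin M, f m ^ ((p+1)/p) = T := by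
      apply Finset.sum_congr rfl
      intro m _
      by_cases hm : a m = 0
      · simp [hf, hm, Real.zero_rpow hconj.ne_zero]
      · have hθm := hθpos m hm
        rw [hf]
        simp only [hm, if_false]
        rw [← Real.rpow_mul (div_nonneg (by positivity) (hθ0 m))]
        rw [show p/(p+1) * ((p+1)/p) = 1 by field_simp, Real.rpow_one]
    have hgr : ∑ m : Fin M, g m ^ (p+1) = ∑ m : Fin M, (θ m) ^ p := by
      apply Finset.sum_congr rfl
      intro m _
      rw [hg, ← Real.rpow_mul (hθ0 m)]
      congr 1
      field_simp
    rw [hfg, hfr, hgr] at holder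
    -- bound second factor by 1
    have hfac2 : (∑ m : Fin M, (θ m) ^ p) ^ (1/(p+1)) ≤ 1 := by
      apply Real.rpow_le_one (Finset.sum_nonneg fun m _ => Real.rpow_nonneg (hθ0 m) _) hθp1
      positivity
    have hST : S ≤ T ^ (p/(p+1)) := by
      calc S ≤ T ^ (1/((p+1)/p)) * (∑ m : Fin M, (θ m) ^ p) ^ (1/(p+1)) := holder
        _ ≤ T ^ (1/((p+1)/p)) * 1 := by
            apply mul_le_mul_of_nonneg_left hfac2 (Real.rpow_nonneg hTnn _)
        _ = T ^ (p/(p+1)) := by rw [mul_one, one_div, inv_div]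
    calc S ^ ((p+1)/p) ≤ (T ^ (p/(p+1))) ^ ((p+1)/p) :=
          Real.rpow_le_rpow hS.le hST (by positivity)
      _ = T := by
          rw [← Real.rpow_mul hTnn, show p/(p+1) * ((p+1)/p) = 1 by field_simp, Real.rpow_one]
end
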